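/- With the dumbbell set D as above, one has λ₀(D) = 2 and δ(D) = √2 − 1 + 2/π, and consequently δ(D)/λ₀(D)² = (√2 − 1)/4 + 1/(2π) ≈ 0.26. -/

import Mathlib

open MeasureTheory Metric

/-- A point of the Euclidean plane. -/
noncomputable def pt (a b : ℝ) : EuclideanSpace ℝ (Fin 2) := WithLp.toLp 2 ![a, b]

/-- The dumbbell: two closed disks of area `π/2` (radius `1/√2`) whose centers are
`2 + √2` apart (gap `2` between boundaries), joined by the segment of length `2`
between their nearest points. -/
noncomputable def dumbbell : Set (EuclideanSpace ℝ (Fin 2)) :=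
  closedBall (pt (-(1 + Real.sqrt 2 / 2)) 0) (1 / Real.sqrt 2) ∪
  closedBall (pt (1 + Real.sqrt 2 / 2) 0) (1 / Real.sqrt 2) ∪
  segment ℝ (pt (-1) 0) (pt 1 0)

/-- The barycenter of the dumbbell. -/
noncomputable def dumbbellBary : EuclideanSpace ℝ (Fin 2) :=
  ((volume dumbbell).toReal)⁻¹ • ∫ x in dumbbell, x

open Real

lemma vol_cb (x : EuclideanSpace ℝ (Fin 2)) (r : ℝ) (hr : 0 ≤ r) :
    volume (closedBall x r) = ENNReal.ofReal (π * r ^ 2) := by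
  rw [EuclideanSpace.volume_closedBall]
  simp only [Fintype.card_fin]
  rw [show ((2:ℕ):ℝ)/2 + 1 = 2 by norm_num, Real.Gamma_two, sq_sqrt pi_nonneg,
    ← ENNReal.ofReal_pow hr, ← ENNReal.ofReal_mul (by positivity), div_one, mul_comm]

lemma dist_pt (a c : ℝ) : dist (pt a 0) (pt c 0) = |a - c| := by
  rw [EuclideanSpace.dist_eq]
  simp [pt, Fin.sum_univ_two, Real.sqrt_sq_eq_abs, Real.dist_eq]

lemma mem_cb_iff (c r : ℝ) (x : EuclideanSpace ℝ (Fin 2)) (hr : 0 ≤ r) :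
    x ∈ closedBall (pt c 0) r ↔ (x 0 - c) ^ 2 + x 1 ^ 2 ≤ r ^ 2 := by
  rw [mem_closedBall, EuclideanSpace.dist_eq]
  rw [Real.sqrt_le_left hr, Fin.sum_univ_two]
  simp [pt, Real.dist_eq, sq_abs]

lemma vol_rect {s t : Set ℝ} (hs : MeasurableSet s) (ht : MeasurableSet t) :
    volume {x : EuclideanSpace ℝ (Fin 2) | x 0 ∈ s ∧ x 1 ∈ t} = volume s * volume t := by
  have h := (EuclideanSpace.volume_preserving_symm_measurableEquiv_toLp (Fin 2)).measure_preimage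
    (s := Set.univ.pi ![s, t]) (MeasurableSet.univ_pi (by
      intro i; fin_cases i <;> simpa)).nullMeasurableSet
  have h2 : (MeasurableEquiv.toLp 2 (Fin 2 → ℝ)).symm ⁻¹' (Set.univ.pi ![s, t]) =
      {x : EuclideanSpace ℝ (Fin 2) | x 0 ∈ s ∧ x 1 ∈ t} := by
    ext x
    simp [Set.mem_pi, Fin.forall_fin_two]
  rw [h2] at h
  rw [h, volume_pi_pi, Fin.prod_univ_two]
  rfl

lemma line_null : volume {x : EuclideanSpace ℝ (Fin 2) | x 1 = 0} = 0 := by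
  have h := vol_rect (s := Set.univ) (t := {0}) MeasurableSet.univ (measurableSet_singleton 0)
  simpa using h

lemma seg_mem_line {x : EuclideanSpace ℝ (Fin 2)} (hx : x ∈ segment ℝ (pt (-1) 0) (pt 1 0)) :
    x 1 = 0 ∧ -1 ≤ x 0 ∧ x 0 ≤ 1 := by
  obtain ⟨a, b, ha, hb, hab, hx⟩ := hx
  have h0 : x 0 = a * (-1) + b * 1 := by rw [← hx]; simp [pt]
  have h1 : x 1 = a * 0 + b * 0 := by rw [← hx]; simp [pt]
  refine ⟨by rw [h1]; ring, by rw [h0]; nlinarith, by rw [h0]; nlinarith⟩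

lemma seg_null : volume (segment ℝ (pt (-1) 0) (pt 1 0)) = 0 :=
  measure_mono_null (fun x hx => (seg_mem_line hx).1) line_null

lemma isCompact_seg : IsCompact (segment ℝ (pt (-1) 0) (pt 1 0)) := by
  rw [segment_eq_image]
  exact (isCompact_Icc).image (by continuity)

lemma measurable_dumbbell : MeasurableSet dumbbell := by
  exact ((measurableSet_closedBall.union measurableSet_closedBall).union
    isCompact_seg.isClosed.measurableSet)

lemma sqrt2_pos : (0:ℝ) < Real.sqrt 2 := by positivity

lemma sq_half : (1 / Real.sqrt 2) ^ 2 = 1 / 2 := by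
  rw [div_pow, sq_sqrt (by norm_num : (0:ℝ) ≤ 2)]; norm_num

lemma disjoint_balls : Disjoint
    (closedBall (pt (-(1 + Real.sqrt 2 / 2)) 0) (1 / Real.sqrt 2))
    (closedBall (pt (1 + Real.sqrt 2 / 2) 0) (1 / Real.sqrt 2)) := by
  apply closedBall_disjoint_closedBall
  rw [dist_pt]
  have h2 : Real.sqrt 2 ^ 2 = 2 := sq_sqrt (by norm_num)
  have := sqrt2_pos
  rw [abs_of_nonpos (by nlinarith)]
  rw [← add_div, div_lt_iff₀ sqrt2_pos]
  nlinarith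

lemma measure_union_null_right' {α} [MeasurableSpace α] {μ : Measure α} {s t : Set α}
    (ht : μ t = 0) : μ (s ∪ t) = μ s :=
  le_antisymm ((measure_union_le _ _).trans (by rw [ht, add_zero])) (measure_mono Set.subset_union_left)

lemma vol_dumbbell : volume dumbbell = ENNReal.ofReal π := by
  unfold dumbbell
  rw [measure_union_null_right' seg_null, measure_union disjoint_balls measurableSet_closedBall,
    vol_cb _ _ (by positivity), vol_cb _ _ (by positivity), sq_half,
    ← ENNReal.ofReal_add (by positivity) (by positivity)]
  ring_nf

lemma neg_pt (a : ℝ) : -pt a 0 = pt (-a) 0 := by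
  ext i; fin_cases i <;> simp [pt]

lemma dumbbell_neg {x : EuclideanSpace ℝ (Fin 2)} (hx : x ∈ dumbbell) : -x ∈ dumbbell := by
  rcases hx with (h | h) | h
  · left; right
    rw [mem_closedBall] at h ⊢
    rw [show pt (1 + Real.sqrt 2/2) 0 = -pt (-(1 + Real.sqrt 2/2)) 0 by rw [neg_pt]; ring_nf,
      dist_neg_neg]
    exact h
  · left; left
    rw [mem_closedBall] at h ⊢
    rw [show pt (-(1 + Real.sqrt 2/2)) 0 = -pt (1 + Real.sqrt 2/2) 0 by rw [neg_pt],
      dist_neg_neg]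
    exact h
  · right
    obtain ⟨a, b, ha, hb, hab, hs⟩ := h
    refine ⟨b, a, hb, ha, by linarith, ?_⟩
    rw [← hs]
    have h1 : -pt (-1) 0 = pt 1 0 := by rw [neg_pt]; norm_num
    have h2 : -pt 1 0 = pt (-1) 0 := by rw [neg_pt]
    rw [neg_add, ← smul_neg, ← smul_neg, h1, h2, add_comm]

lemma dumbbell_neg_iff (x : EuclideanSpace ℝ (Fin 2)) : -x ∈ dumbbell ↔ x ∈ dumbbell :=
  ⟨fun h => by simpa using dumbbell_neg h, dumbbell_neg⟩

lemma integral_dumbbell : (∫ x in dumbbell, x : EuclideanSpace ℝ (Fin 2)) = 0 := by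
  have hI : (∫ x in dumbbell, x) = ∫ x, dumbbell.indicator id x :=
    (integral_indicator measurable_dumbbell).symm
  have hneg : ∀ x : EuclideanSpace ℝ (Fin 2),
      dumbbell.indicator id (-x) = -(dumbbell.indicator id x) := by
    intro x
    by_cases hx : x ∈ dumbbell
    · rw [Set.indicator_of_mem ((dumbbell_neg_iff x).2 hx), Set.indicator_of_mem hx]; rfl
    · rw [Set.indicator_of_notMem (fun h => hx ((dumbbell_neg_iff x).1 h)),
        Set.indicator_of_notMem hx, neg_zero]
  have h2 : (∫ x, dumbbell.indicator id (-x)) = ∫ x, dumbbell.indicator id x :=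
    integral_neg_eq_self _ _
  rw [hI]
  have h3 : (∫ x, dumbbell.indicator id x) = -(∫ x, dumbbell.indicator id x) := by
    nth_rewrite 1 [← h2]
    simp_rw [hneg]
    exact integral_neg _
  have h4 : (2:ℝ) • (∫ x, dumbbell.indicator id x) = 0 := by
    rw [two_smul]; nth_rewrite 2 [h3]; simp
  simpa [smul_eq_zero] using h4

lemma bary_zero :
    (((volume dumbbell).toReal)⁻¹ • ∫ x in dumbbell, x : EuclideanSpace ℝ (Fin 2)) = 0 := by
  rw [integral_dumbbell, smul_zero]

lemma zero_pt : (0 : EuclideanSpace ℝ (Fin 2)) = pt 0 0 := by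
  ext i; fin_cases i <;> simp [pt]

lemma half_sqrt : Real.sqrt 2 / 2 = 1 / Real.sqrt 2 := by
  rw [div_eq_div_iff two_ne_zero (ne_of_gt sqrt2_pos), one_mul,
    Real.mul_self_sqrt (by norm_num)]

lemma inter_null : volume (closedBall (0 : EuclideanSpace ℝ (Fin 2)) 1 ∩ dumbbell) = 0 := by
  apply measure_mono_null (t := sphere (0 : EuclideanSpace ℝ (Fin 2)) 1 ∪
    {x : EuclideanSpace ℝ (Fin 2) | x 1 = 0})
  · rintro x ⟨hxB, hxD⟩
    have hs2 := sqrt2_pos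
    rw [mem_closedBall] at hxB
    have key : ∀ c : ℝ, |c| = 1 + 1/Real.sqrt 2 → dist x (pt c 0) ≤ 1/Real.sqrt 2 →
        x ∈ sphere (0 : EuclideanSpace ℝ (Fin 2)) 1 := by
      intro c hc hxc
      have hd : dist (pt c 0) (0 : EuclideanSpace ℝ (Fin 2)) = 1 + 1/Real.sqrt 2 := by
        rw [zero_pt, dist_pt, sub_zero, hc]
      have htri := dist_triangle (pt c 0) x (0 : EuclideanSpace ℝ (Fin 2))
      rw [dist_comm (pt c 0) x, hd] at htri
      rw [mem_sphere]
      have : (1:ℝ) ≤ dist x 0 := by linarith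
      linarith [hxB]
    rcases hxD with (h | h) | h
    · left
      refine key _ ?_ (by rwa [mem_closedBall, half_sqrt] at h)
      have h0 : (0:ℝ) < 1 + 1/Real.sqrt 2 := by positivity
      rw [abs_of_nonpos (by linarith [sqrt2_pos])]; ring
    · left
      refine key _ ?_ (by rwa [mem_closedBall, half_sqrt] at h)
      rw [abs_of_nonneg (by positivity)]
    · right; exact (seg_mem_line h).1
  · exact measure_union_null (Measure.addHaar_sphere volume 0 1) line_null

lemma vol_symmdiff :
    volume ((dumbbell \ closedBall (0 : EuclideanSpace ℝ (Fin 2)) 1) ∪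
      (closedBall (0 : EuclideanSpace ℝ (Fin 2)) 1 \ dumbbell)) = ENNReal.ofReal (2 * π) := by
  set B := closedBall (0 : EuclideanSpace ℝ (Fin 2)) 1
  have h1 : volume (dumbbell \ B) = volume dumbbell := by
    rw [show dumbbell \ B = dumbbell \ (B ∩ dumbbell) by ext x; simp only [Set.mem_diff, Set.mem_inter_iff, not_and]; tauto]
    exact measure_diff_null inter_null
  have h2 : volume (B \ dumbbell) = volume B := by
    rw [show B \ dumbbell = B \ (B ∩ dumbbell) by ext x; simp only [Set.mem_diff, Set.mem_inter_iff, not_and]; tauto]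
    exact measure_diff_null inter_null
  rw [measure_union disjoint_sdiff_sdiff (measurableSet_closedBall.diff measurable_dumbbell),
    h1, h2, vol_dumbbell, vol_cb _ _ zero_le_one,
    ← ENNReal.ofReal_add (by positivity) (by positivity)]
  norm_num
  ring_nf
  rw [ENNReal.ofReal_mul' (by norm_num)]; norm_num

lemma coord_le_dist (x y : EuclideanSpace ℝ (Fin 2)) (i : Fin 2) :
    |x i - y i| ≤ dist x y := by
  rw [EuclideanSpace.dist_eq, ← Real.sqrt_sq_eq_abs]
  apply Real.sqrt_le_sqrt
  have : ∀ j, (0:ℝ) ≤ (x j - y j)^2 := fun j => sq_nonneg _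
  calc (x i - y i)^2 ≤ ∑ j, (x j - y j)^2 :=
        Finset.single_le_sum (fun j _ => this j) (Finset.mem_univ i)
    _ = ∑ j, dist (x j) (y j) ^ 2 := by simp [Real.dist_eq, sq_abs]

lemma mem_seg {t : ℝ} (h1 : -1 ≤ t) (h2 : t ≤ 1) :
    pt t 0 ∈ segment ℝ (pt (-1) 0) (pt 1 0) := by
  refine ⟨(1-t)/2, (1+t)/2, by linarith, by linarith, by ring, ?_⟩
  ext i; fin_cases i <;> simp [pt] <;> ring

lemma pt_coord (p : EuclideanSpace ℝ (Fin 2)) (hp : p 1 = 0) : p = pt (p 0) 0 := by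
  ext i; fin_cases i <;> simp [pt, hp]

lemma cthick_eq {ε : ℝ} (hε : 0 ≤ ε) : cthickening ε dumbbell =
    closedBall (pt (-(1 + Real.sqrt 2 / 2)) 0) (ε + 1 / Real.sqrt 2) ∪
    closedBall (pt (1 + Real.sqrt 2 / 2) 0) (ε + 1 / Real.sqrt 2) ∪
    cthickening ε (segment ℝ (pt (-1) 0) (pt 1 0)) := by
  unfold dumbbell
  rw [cthickening_union, cthickening_union,
    cthickening_closedBall hε (by positivity), cthickening_closedBall hε (by positivity)]

noncomputable def Rect (a ε : ℝ) : Set (EuclideanSpace ℝ (Fin 2)) :=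
  {x | x 0 ∈ Set.Icc (-a) a ∧ x 1 ∈ Set.Icc (-ε) ε}

lemma vol_Rect (a ε : ℝ) (ha : 0 ≤ a) (hε : 0 ≤ ε) :
    volume (Rect a ε) = ENNReal.ofReal (4 * a * ε) := by
  unfold Rect
  rw [vol_rect measurableSet_Icc measurableSet_Icc, Real.volume_Icc, Real.volume_Icc,
    ← ENNReal.ofReal_mul (by linarith)]
  ring_nf

lemma cthick_seg_subset {ε : ℝ} (hε : 0 ≤ ε) :
    cthickening ε (segment ℝ (pt (-1) 0) (pt 1 0)) ⊆
      Rect 1 ε ∪ closedBall (pt (-1) 0) ε ∪ closedBall (pt 1 0) ε := by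
  rw [isCompact_seg.cthickening_eq_biUnion_closedBall hε]
  rintro y hy
  simp only [Set.mem_iUnion] at hy
  obtain ⟨p, hp, hyp⟩ := hy
  obtain ⟨hp1, hp0l, hp0r⟩ := seg_mem_line hp
  rw [pt_coord p hp1] at hyp
  rw [mem_cb_iff _ _ _ hε] at hyp
  rcases le_or_gt (y 0) 1 with h1 | h1
  · rcases le_or_gt (-1) (y 0) with h2 | h2
    · left; left
      have h3 : (y 1)^2 ≤ ε^2 := by nlinarith [sq_nonneg (y 0 - p 0)]
      have h4 : |y 1| ≤ ε := by
        rw [← sq_abs] at h3; nlinarith [abs_nonneg (y 1)]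
      exact ⟨⟨h2, h1⟩, abs_le.mp h4⟩
    · left; right
      rw [mem_cb_iff _ _ _ hε]
      have : (y 0 - (-1))^2 ≤ (y 0 - p 0)^2 := by nlinarith
      nlinarith
  · right
    rw [mem_cb_iff _ _ _ hε]
    have : (y 0 - 1)^2 ≤ (y 0 - p 0)^2 := by nlinarith
    nlinarith

lemma endball_subset_left {ε : ℝ} (hε : 0 ≤ ε) :
    closedBall (pt (-1) 0) ε ⊆ closedBall (pt (-(1 + Real.sqrt 2 / 2)) 0) (ε + 1 / Real.sqrt 2) := by
  apply closedBall_subset_closedBall'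
  rw [dist_pt, ← half_sqrt]
  have h0 : (0:ℝ) < 1/Real.sqrt 2 := by positivity
  rw [abs_of_nonneg (by linarith [sqrt2_pos])]
  ring_nf
  exact le_refl _

lemma endball_subset_right {ε : ℝ} (hε : 0 ≤ ε) :
    closedBall (pt 1 0) ε ⊆ closedBall (pt (1 + Real.sqrt 2 / 2) 0) (ε + 1 / Real.sqrt 2) := by
  apply closedBall_subset_closedBall'
  rw [dist_pt, ← half_sqrt]
  have h0 : (0:ℝ) < 1/Real.sqrt 2 := by positivity
  rw [abs_of_nonpos (by linarith [sqrt2_pos])]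
  ring_nf
  exact le_refl _

lemma upper_bound {ε : ℝ} (hε : 0 ≤ ε) :
    volume (cthickening ε dumbbell) ≤
      ENNReal.ofReal (2 * π * (ε + 1 / Real.sqrt 2)^2 + 4 * ε) := by
  rw [cthick_eq hε]
  set B1 := closedBall (pt (-(1 + Real.sqrt 2 / 2)) 0) (ε + 1 / Real.sqrt 2)
  set B2 := closedBall (pt (1 + Real.sqrt 2 / 2) 0) (ε + 1 / Real.sqrt 2)
  have hsub : B1 ∪ B2 ∪ cthickening ε (segment ℝ (pt (-1) 0) (pt 1 0)) ⊆
      B1 ∪ B2 ∪ Rect 1 ε := by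
    apply Set.union_subset (Set.subset_union_left)
    refine (cthick_seg_subset hε).trans ?_
    rintro y ((h | h) | h)
    · right; exact h
    · left; left; exact endball_subset_left hε h
    · left; right; exact endball_subset_right hε h
  refine (measure_mono hsub).trans ?_
  refine (measure_union_le _ _).trans ?_
  refine (add_le_add (measure_union_le _ _) (le_refl _)).trans ?_
  rw [vol_cb _ _ (by positivity), vol_cb _ _ (by positivity), vol_Rect 1 ε zero_le_one hε,
    ← ENNReal.ofReal_add (by positivity) (by positivity),
    ← ENNReal.ofReal_add (by positivity) (by positivity)]
  apply ENNReal.ofReal_le_ofReal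
  nlinarith [sq_nonneg (ε + 1/Real.sqrt 2), pi_pos]

lemma rect_subset_cthick {ε : ℝ} (hε : 0 < ε) (hε4 : ε ≤ 1/4) :
    Rect (1 - 2*ε) ε ⊆ cthickening ε (segment ℝ (pt (-1) 0) (pt 1 0)) := by
  rintro x ⟨⟨hx0l, hx0r⟩, hx1l, hx1r⟩
  apply mem_cthickening_of_dist_le x (pt (x 0) 0) ε _ (mem_seg (by linarith) (by linarith))
  rw [EuclideanSpace.dist_eq, Fin.sum_univ_two]
  have : dist (x 0) (pt (x 0) 0 0) = 0 := by simp [pt]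
  have h1 : dist (x 1) (pt (x 0) 0 1) = |x 1| := by simp [pt, Real.dist_eq]
  rw [this, h1]
  rw [show (0:ℝ)^2 + |x 1|^2 = |x 1|^2 by ring, Real.sqrt_sq (abs_nonneg _), abs_le]
  exact ⟨hx1l, hx1r⟩

lemma rect_disjoint_ball {ε : ℝ} (hε : 0 < ε) (hε4 : ε ≤ 1/4) :
    Disjoint (closedBall (pt (-(1 + Real.sqrt 2 / 2)) 0) (ε + 1 / Real.sqrt 2) ∪
      closedBall (pt (1 + Real.sqrt 2 / 2) 0) (ε + 1 / Real.sqrt 2))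
      (Rect (1 - 2*ε) ε) := by
  rw [Set.disjoint_left]
  rintro x (hx | hx) ⟨⟨h0l, h0r⟩, _⟩ <;>
  · rw [mem_cb_iff _ _ _ (by positivity)] at hx
    have hr := half_sqrt
    have hs := sqrt2_pos
    nlinarith [sq_nonneg (x 1), sq_nonneg (x 0)]

lemma lower_bound {ε : ℝ} (hε : 0 < ε) (hε4 : ε ≤ 1/4) :
    ENNReal.ofReal (2 * π * (ε + 1 / Real.sqrt 2)^2 + 4 * (1 - 2*ε) * ε) ≤
      volume (cthickening ε dumbbell) := by
  rw [cthick_eq hε.le]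
  set B1 := closedBall (pt (-(1 + Real.sqrt 2 / 2)) 0) (ε + 1 / Real.sqrt 2)
  set B2 := closedBall (pt (1 + Real.sqrt 2 / 2) 0) (ε + 1 / Real.sqrt 2)
  have hsub : B1 ∪ B2 ∪ Rect (1 - 2*ε) ε ⊆
      B1 ∪ B2 ∪ cthickening ε (segment ℝ (pt (-1) 0) (pt 1 0)) :=
    Set.union_subset_union_right _ (rect_subset_cthick hε hε4)
  refine le_trans ?_ (measure_mono hsub)
  have hd12 : Disjoint B1 B2 := by
    apply closedBall_disjoint_closedBall
    rw [dist_pt]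
    have h2 : Real.sqrt 2 ^ 2 = 2 := sq_sqrt (by norm_num)
    have hs := sqrt2_pos
    have hr := half_sqrt
    rw [abs_of_nonpos (by nlinarith)]
    nlinarith
  have hrectmeas : MeasurableSet (Rect (1 - 2*ε) ε) := by
    unfold Rect
    exact ((measurable_pi_apply (0 : Fin 2)).comp
        (MeasurableEquiv.toLp 2 (Fin 2 → ℝ)).symm.measurable measurableSet_Icc).inter
      ((measurable_pi_apply (1 : Fin 2)).comp
        (MeasurableEquiv.toLp 2 (Fin 2 → ℝ)).symm.measurable measurableSet_Icc)
  rw [measure_union (rect_disjoint_ball hε hε4) hrectmeas,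
    measure_union hd12 measurableSet_closedBall,
    vol_cb _ _ (by positivity), vol_cb _ _ (by positivity),
    vol_Rect _ _ (by linarith) hε.le,
    ← ENNReal.ofReal_add (by positivity) (by positivity),
    ← ENNReal.ofReal_add (by positivity) (by nlinarith)]
  apply ENNReal.ofReal_le_ofReal
  nlinarith [sq_nonneg (ε + 1/Real.sqrt 2)]

lemma ident (ε : ℝ) : 2*π*(ε + 1/Real.sqrt 2)^2 + 4*ε - π = (2*Real.sqrt 2*π + 4 + 2*π*ε)*ε := by
  have h2 : Real.sqrt 2^2 = 2 := sq_sqrt (by norm_num)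
  have hs := sqrt2_pos
  field_simp
  linear_combination (-2*π*ε*Real.sqrt 2 - π) * h2

lemma isCompact_dumbbell : IsCompact dumbbell :=
  ((isCompact_closedBall _ _).union (isCompact_closedBall _ _)).union isCompact_seg

lemma cthick_fin (ε : ℝ) : volume (cthickening ε dumbbell) ≠ ⊤ :=
  (isCompact_dumbbell.cthickening.measure_lt_top).ne

lemma tendsto_aux (a b : ℝ) :
    Filter.Tendsto (fun ε : ℝ => a + b*ε) (nhdsWithin 0 (Set.Ioi 0)) (nhds a) := by
  have hc : Continuous (fun ε : ℝ => a + b*ε) := by continuity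
  have := (hc.tendsto 0).mono_left (nhdsWithin_le_nhds (s := Set.Ioi (0:ℝ)))
  simpa using this

lemma tendsto_per : Filter.Tendsto
    (fun ε : ℝ => ((volume (cthickening ε dumbbell)).toReal - (volume dumbbell).toReal) / ε)
    (nhdsWithin 0 (Set.Ioi 0)) (nhds (2*Real.sqrt 2*π + 4)) := by
  have hA : (2*Real.sqrt 2*π + 4 : ℝ) = (2*Real.sqrt 2*π + 4) + 0 := by ring
  apply tendsto_of_tendsto_of_tendsto_of_le_of_le'
    (g := fun ε : ℝ => (2*Real.sqrt 2*π + 4) + (2*π - 8)*ε)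
    (h := fun ε : ℝ => (2*Real.sqrt 2*π + 4) + (2*π)*ε)
    (tendsto_aux _ _) (tendsto_aux _ _)
  · filter_upwards [Ioc_mem_nhdsGT_of_mem (show (0:ℝ) ∈ Set.Ico (0:ℝ) (1/4) by norm_num)]
      with ε hε
    obtain ⟨hε0, hε4⟩ := hε
    rw [vol_dumbbell, ENNReal.toReal_ofReal pi_nonneg]
    rw [le_div_iff₀ hε0]
    have hl : 2*π*(ε + 1/Real.sqrt 2)^2 + 4*(1 - 2*ε)*ε ≤
        (volume (cthickening ε dumbbell)).toReal := by
      rw [← ENNReal.toReal_ofReal (show (0:ℝ) ≤ 2*π*(ε + 1/Real.sqrt 2)^2 + 4*(1 - 2*ε)*ε by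
        nlinarith [sq_nonneg (ε + 1/Real.sqrt 2), pi_pos])]
      exact ENNReal.toReal_mono (cthick_fin ε) (lower_bound hε0 hε4)
    nlinarith [ident ε]
  · filter_upwards [Ioc_mem_nhdsGT_of_mem (show (0:ℝ) ∈ Set.Ico (0:ℝ) (1/4) by norm_num)]
      with ε hε
    obtain ⟨hε0, hε4⟩ := hε
    rw [vol_dumbbell, ENNReal.toReal_ofReal pi_nonneg]
    rw [div_le_iff₀ hε0]
    have hu : (volume (cthickening ε dumbbell)).toReal ≤ 2*π*(ε + 1/Real.sqrt 2)^2 + 4*ε :=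
      ENNReal.toReal_le_of_le_ofReal (by positivity) (upper_bound hε0.le)
    nlinarith [ident ε]

/-- For the dumbbell `D` one has `λ₀(D) = 2`, `δ(D) = √2 - 1 + 2/π`, and hence
`δ(D)/λ₀(D)² = (√2 - 1)/4 + 1/(2π)`. -/
theorem stmt_10 (P : ℝ)
    (hP : Filter.Tendsto
      (fun ε : ℝ => ((volume (cthickening ε dumbbell)).toReal - (volume dumbbell).toReal) / ε)
      (nhdsWithin 0 (Set.Ioi 0)) (nhds P)) :
    (volume ((dumbbell \ closedBall dumbbellBary 1) ∪
        (closedBall dumbbellBary 1 \ dumbbell))).toReal / (volume dumbbell).toReal = 2 ∧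
    P / (2 * Real.pi) - 1 = Real.sqrt 2 - 1 + 2 / Real.pi ∧
    (P / (2 * Real.pi) - 1) /
      ((volume ((dumbbell \ closedBall dumbbellBary 1) ∪
          (closedBall dumbbellBary 1 \ dumbbell))).toReal / (volume dumbbell).toReal) ^ 2
      = (Real.sqrt 2 - 1) / 4 + 1 / (2 * Real.pi) := by
  have hbary : dumbbellBary = 0 := bary_zero
  have hP4 : P = 2*Real.sqrt 2*π + 4 := tendsto_nhds_unique hP tendsto_per
  have hratio : (volume ((dumbbell \ closedBall dumbbellBary 1) ∪
      (closedBall dumbbellBary 1 \ dumbbell))).toReal / (volume dumbbell).toReal = 2 := by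
    rw [hbary, vol_symmdiff, vol_dumbbell, ENNReal.toReal_ofReal (by positivity),
      ENNReal.toReal_ofReal pi_nonneg]
    field_simp
  have hdelta : P / (2*π) - 1 = Real.sqrt 2 - 1 + 2/π := by
    rw [hP4]
    have hπ := pi_ne_zero
    field_simp
    ring
  refine ⟨hratio, hdelta, ?_⟩
  rw [hratio, hdelta]
  have hπ := pi_ne_zero
  field_simp
  ring
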